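/- Under the hypotheses of the scattering norm decay theorem, and writing Δ_{w,a} = D_a^* M_w D_a, one has for each k ≥ 1: ‖g_k‖ ≤ √t (1 − e^{−tλ_max})^{(k−1)/2} ‖M_{√w} D_a f‖. -/

import Mathlib

open Matrix Real MeasureTheory ProbabilityTheory

variable {V : Type*} [Fintype V] [DecidableEq V]

/-- The difference operator `(D_a f)(i,j) = f j - e^{a(i,j)} f i`, as a matrix from
`ℓ²(V)` to `ℓ²(E)`. -/
noncomputable def Dmat (E : Finset (V × V)) (a : V × V → ℝ) : Matrix E V ℝ :=
  fun e v => (if v = (e : V × V).2 then (1 : ℝ) else 0) -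
    Real.exp (a e) * (if v = (e : V × V).1 then (1 : ℝ) else 0)

/-- The Laplacian `Δ_{w,a} = D_a^* M_w D_a` associated with the quadratic form
`Q_{w,a}(f) = Σ_{(i,j)∈E} w(i,j) |e^{a(i,j)} f i − f j|²`. -/
noncomputable def Lap (E : Finset (V × V)) (w a : V × V → ℝ) : Matrix V V ℝ :=
  (Dmat E a)ᵀ * Matrix.diagonal (fun e : E => w e) * Dmat E a

/-- Weak connectivity of a directed graph: any two vertices are joined by a chain of
edges ignoring orientation. -/
def WeaklyConnected (E : Finset (V × V)) : Prop :=
  ∀ u v : V, Relation.ReflTransGen (fun x y => (x, y) ∈ E ∨ (y, x) ∈ E) u v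

/-! ### Auxiliary lemmas -/

lemma lap_quad (E : Finset (V × V)) (w a : V × V → ℝ) (x : V → ℝ) :
    x ⬝ᵥ ((Lap E w a) *ᵥ x) = ∑ e : E, w e * ((Dmat E a).mulVec x e) ^ 2 := by
  show x ⬝ᵥ (((Dmat E a)ᵀ * Matrix.diagonal (fun e : E => w e) * Dmat E a) *ᵥ x) = _
  rw [← mulVec_mulVec, ← mulVec_mulVec, dotProduct_mulVec, vecMul_transpose]
  simp only [dotProduct, mulVec_diagonal]
  exact Finset.sum_congr rfl fun e _ => by ring

lemma quad_conj (M : Matrix V V ℝ) (c : V → ℝ) (x : V → ℝ) :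
    x ⬝ᵥ ((M * Matrix.diagonal c * star M) *ᵥ x)
      = ∑ i, c i * ((star M *ᵥ x) i) ^ 2 := by
  have hx : star M *ᵥ x = x ᵥ* M := by
    rw [star_eq_conjTranspose, conjTranspose_eq_transpose_of_trivial, mulVec_transpose]
  rw [← mulVec_mulVec, ← mulVec_mulVec, dotProduct_mulVec, ← hx]
  simp only [dotProduct, mulVec_diagonal]
  exact Finset.sum_congr rfl fun i _ => by ring

lemma norm_conj (M : Matrix V V ℝ) (hM : M * star M = 1) (x : V → ℝ) :
    ∑ i, ((star M *ᵥ x) i) ^ 2 = ∑ i, (x i) ^ 2 := by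
  have h1 : ∀ y : V → ℝ, ∑ i, (y i) ^ 2 = y ⬝ᵥ y := by
    intro y; simp [dotProduct, sq]
  have hx : star M *ᵥ x = x ᵥ* M := by
    rw [star_eq_conjTranspose, conjTranspose_eq_transpose_of_trivial, mulVec_transpose]
  rw [h1, h1]
  nth_rewrite 1 [hx]
  rw [← dotProduct_mulVec, mulVec_mulVec, hM, one_mulVec]

lemma lap_herm (E : Finset (V × V)) (w a : V × V → ℝ) : (Lap E w a).IsHermitian := by
  show (Lap E w a)ᴴ = Lap E w a
  rw [show Lap E w a = (Dmat E a)ᵀ * Matrix.diagonal (fun e : E => w e) * Dmat E a from rfl]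
  rw [conjTranspose_eq_transpose_of_trivial, transpose_mul, transpose_mul,
    transpose_transpose, diagonal_transpose, Matrix.mul_assoc]

lemma lap_psd (E : Finset (V × V)) (w a : V × V → ℝ) (hw : ∀ e ∈ E, 0 ≤ w e) :
    (Lap E w a).PosSemidef := by
  have hsq : Matrix.diagonal (fun e : E => Real.sqrt (w e)) *
      Matrix.diagonal (fun e : E => Real.sqrt (w e)) =
      Matrix.diagonal (fun e : E => w e) := by
    rw [diagonal_mul_diagonal]
    exact congrArg Matrix.diagonal (funext fun e => Real.mul_self_sqrt (hw e e.2))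
  have key : (Matrix.diagonal (fun e : E => Real.sqrt (w e)) * Dmat E a)ᴴ *
      (Matrix.diagonal (fun e : E => Real.sqrt (w e)) * Dmat E a) = Lap E w a := by
    rw [conjTranspose_eq_transpose_of_trivial, transpose_mul, diagonal_transpose]
    show _ = (Dmat E a)ᵀ * Matrix.diagonal (fun e : E => w e) * Dmat E a
    rw [Matrix.mul_assoc, ← Matrix.mul_assoc (Matrix.diagonal fun e : E => Real.sqrt (w e)), hsq, Matrix.mul_assoc]
  rw [← key]
  exact posSemidef_conjTranspose_mul_self _

lemma Dmat_mulVec (E : Finset (V × V)) (a : V × V → ℝ) (x : V → ℝ) (e : E) :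
    (Dmat E a).mulVec x e = x (e : V × V).2 - Real.exp (a e) * x (e : V × V).1 := by
  simp [Dmat, mulVec, dotProduct, sub_mul, Finset.sum_sub_distrib, ite_mul, mul_assoc,
    mul_ite, mul_zero, mul_one]

/-- refined scattering decay
`‖g_k‖ ≤ √t (1-e^{-tλmax})^{(k-1)/2} ‖M_{√w} D_a f‖`. -/
theorem stmt_11 (E : Finset (V × V)) (w a : V × V → ℝ)
    (hconn : WeaklyConnected E) (hw : ∀ e ∈ E, 0 < w e)
    (t : ℝ) (ht : 0 < t) (lmax : ℝ)
    (hlmax : IsGreatest {μ : ℝ | ∃ f : V → ℝ, f ≠ 0 ∧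
      (Lap E w a).mulVec f = μ • f} lmax)
    (S : Matrix V V ℝ) (hS : S.PosSemidef)
    (hSsq : S * S = 1 - NormedSpace.exp ((-t) • Lap E w a))
    (f : V → ℝ) (g : ℕ → V → ℝ) (hg0 : g 0 = f)
    (hg : ∀ k, g (k + 1) = S.mulVec (fun i => |g k i|))
    (k : ℕ) (hk : 1 ≤ k) :
    Real.sqrt (∑ i, (g k i) ^ 2) ≤
      Real.sqrt t * (1 - Real.exp (-(t * lmax))) ^ (((k : ℝ) - 1) / 2) *
        Real.sqrt (∑ e : E, w e * ((Dmat E a).mulVec f e) ^ 2) := by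
  classical
  set Δ : Matrix V V ℝ := Lap E w a with hΔdef
  have hpsd : Δ.PosSemidef := lap_psd E w a (fun e he => (hw e he).le)
  have hherm : Δ.IsHermitian := hpsd.1
  set M : Matrix V V ℝ := (hherm.eigenvectorUnitary : Matrix V V ℝ) with hMdef
  set d : V → ℝ := hherm.eigenvalues with hddef
  have hMN : M * star M = 1 :=
    Matrix.mem_unitaryGroup_iff.mp (hherm.eigenvectorUnitary).2
  have hNM : star M * M = 1 :=
    Matrix.mem_unitaryGroup_iff'.mp (hherm.eigenvectorUnitary).2
  have hspec : Δ = M * Matrix.diagonal d * star M := by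
    have := hherm.spectral_theorem
    simpa [RCLike.ofReal_real_eq_id] using this
  -- eigenvalue bounds
  have hd0 : ∀ i, 0 ≤ d i := fun i => hpsd.eigenvalues_nonneg i
  have hdle : ∀ i, d i ≤ lmax := by
    intro i
    exact hlmax.2 ⟨_, fun h => hherm.eigenvectorBasis.orthonormal.ne_zero i (by ext j; simpa using congrFun h j),
      hherm.mulVec_eigenvectorBasis i⟩
  have hlmax0 : 0 ≤ lmax := by
    obtain ⟨v, hv0, hv⟩ := hlmax.1
    have hq : 0 ≤ v ⬝ᵥ (Δ *ᵥ v) := by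
      rw [hΔdef, lap_quad]
      exact Finset.sum_nonneg fun e _ => mul_nonneg (hw e e.2).le (sq_nonneg _)
    have hvv : (0 : ℝ) < v ⬝ᵥ v := by
      obtain ⟨i, hi⟩ := Function.ne_iff.mp hv0
      exact Finset.sum_pos' (fun j _ => mul_self_nonneg _)
        ⟨i, Finset.mem_univ i, mul_self_pos.mpr hi⟩
    rw [hv] at hq
    rw [dotProduct_smul, smul_eq_mul] at hq
    nlinarith
  set b : ℝ := 1 - Real.exp (-(t * lmax)) with hbdef
  have hb0 : (0 : ℝ) ≤ b := by
    have : Real.exp (-(t * lmax)) ≤ Real.exp 0 :=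
      Real.exp_le_exp.mpr (by nlinarith)
    rw [Real.exp_zero] at this
    linarith
  -- exp formula
  have hsmul : (-t) • Δ = M * Matrix.diagonal (fun i => -t * d i) * star M := by
    have h1 : Matrix.diagonal (fun i => -t * d i) = (-t) • Matrix.diagonal d := by
      rw [← diagonal_smul]
      congr 1
    rw [hspec, h1, mul_smul_comm, smul_mul_assoc]
  have hMunit : IsUnit M := by
    refine ⟨⟨M, star M, ?_, ?_⟩, rfl⟩
    · exact hMN
    · exact hNM
  have hMinv : M⁻¹ = star M := inv_eq_left_inv hNM
  have hexp : NormedSpace.exp ((-t) • Δ)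
      = M * Matrix.diagonal (fun i => Real.exp (-t * d i)) * star M := by
    rw [hsmul, ← hMinv, Matrix.exp_conj M _ hMunit, Matrix.exp_diagonal, hMinv, Pi.exp_def]
    simp only [← Real.exp_eq_exp_ℝ]
  have hone : (1 : Matrix V V ℝ) = M * Matrix.diagonal (fun _ : V => (1 : ℝ)) * star M := by
    rw [diagonal_one, mul_one, hMN]
  have hdiff : (1 : Matrix V V ℝ) - NormedSpace.exp ((-t) • Δ)
      = M * Matrix.diagonal (fun i => 1 - Real.exp (-t * d i)) * star M := by
    rw [hexp]
    nth_rewrite 1 [hone]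
    rw [← sub_mul, ← mul_sub, diagonal_sub]
  have hSS : S * S = M * Matrix.diagonal (fun i => 1 - Real.exp (-t * d i)) * star M :=
    hSsq.trans hdiff
  -- quadratic form computations
  have hqSS : ∀ x : V → ℝ, x ⬝ᵥ ((S * S) *ᵥ x)
      = ∑ i, (1 - Real.exp (-t * d i)) * ((star M *ᵥ x) i) ^ 2 := by
    intro x; rw [hSS]; exact quad_conj M _ x
  have hqΔ : ∀ x : V → ℝ, x ⬝ᵥ (Δ *ᵥ x) = ∑ i, d i * ((star M *ᵥ x) i) ^ 2 := by
    intro x; rw [hspec]; exact quad_conj M _ x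
  -- norm identities
  have key1 : ∀ h : V → ℝ, ∑ i, (S *ᵥ h) i ^ 2 = h ⬝ᵥ ((S * S) *ᵥ h) := by
    intro h
    have hsymm : Sᵀ = S := by
      rw [← conjTranspose_eq_transpose_of_trivial]; exact hS.1
    calc ∑ i, (S *ᵥ h) i ^ 2 = (S *ᵥ h) ⬝ᵥ (S *ᵥ h) := by simp [dotProduct, sq]
      _ = ((S *ᵥ h) ᵥ* S) ⬝ᵥ h := dotProduct_mulVec _ _ _
      _ = (Sᵀ *ᵥ (S *ᵥ h)) ⬝ᵥ h := by rw [mulVec_transpose]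
      _ = ((S * S) *ᵥ h) ⬝ᵥ h := by rw [hsymm, mulVec_mulVec]
      _ = h ⬝ᵥ ((S * S) *ᵥ h) := dotProduct_comm _ _
  have boundA : ∀ h : V → ℝ, h ⬝ᵥ ((S * S) *ᵥ h) ≤ t * (h ⬝ᵥ (Δ *ᵥ h)) := by
    intro h
    rw [hqSS, hqΔ, Finset.mul_sum]
    refine Finset.sum_le_sum fun i _ => ?_
    have h1 : 1 - Real.exp (-t * d i) ≤ t * d i := by
      have := Real.add_one_le_exp (-(t * d i))
      rw [show -t * d i = -(t * d i) by ring]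
      linarith
    have := mul_le_mul_of_nonneg_right h1 (sq_nonneg ((star M *ᵥ h) i))
    linarith [this]
  have boundB : ∀ h : V → ℝ, h ⬝ᵥ ((S * S) *ᵥ h) ≤ b * ∑ i, (h i) ^ 2 := by
    intro h
    rw [hqSS, ← norm_conj M hMN h, Finset.mul_sum]
    refine Finset.sum_le_sum fun i _ => ?_
    have h1 : 1 - Real.exp (-t * d i) ≤ b := by
      rw [hbdef]
      have : Real.exp (-(t * lmax)) ≤ Real.exp (-t * d i) :=
        Real.exp_le_exp.mpr (by nlinarith [hdle i])
      linarith
    exact mul_le_mul_of_nonneg_right h1 (sq_nonneg _)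
  -- the quadratic form decreases under absolute value
  set Q : ℝ := ∑ e : E, w e * ((Dmat E a).mulVec f e) ^ 2 with hQdef
  have hQ0 : 0 ≤ Q :=
    Finset.sum_nonneg fun e _ => mul_nonneg (hw e e.2).le (sq_nonneg _)
  have habsQ : (fun i => |f i|) ⬝ᵥ (Δ *ᵥ (fun i => |f i|)) ≤ Q := by
    rw [hΔdef, lap_quad, hQdef]
    refine Finset.sum_le_sum fun e _ => ?_
    refine mul_le_mul_of_nonneg_left ?_ (hw e e.2).le
    rw [Dmat_mulVec, Dmat_mulVec]
    have h1 : |f (e : V × V).2| - Real.exp (a e) * |f (e : V × V).1|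
        = |f (e : V × V).2| - |Real.exp (a e) * f (e : V × V).1| := by
      rw [abs_mul, abs_of_pos (Real.exp_pos _)]
    rw [h1]
    have h2 := abs_abs_sub_abs_le_abs_sub (f (e : V × V).2) (Real.exp (a e) * f (e : V × V).1)
    have h3 := abs_nonneg (|f (e : V × V).2| - |Real.exp (a e) * f (e : V × V).1|)
    have h4 := sq_abs (|f (e : V × V).2| - |Real.exp (a e) * f (e : V × V).1|)
    have h5 := sq_abs (f (e : V × V).2 - Real.exp (a e) * f (e : V × V).1)
    nlinarith [h2, h3, h4, h5, abs_nonneg (f (e : V × V).2 - Real.exp (a e) * f (e : V × V).1)]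
  -- main induction
  have main : ∀ m : ℕ, 1 ≤ m → ∑ i, (g m i) ^ 2 ≤ b ^ (m - 1) * (t * Q) := by
    intro m hm
    induction m with
    | zero => omega
    | succ n ih =>
      rcases Nat.eq_zero_or_pos n with rfl | hn
      · rw [hg 0, hg0]
        simp only [Nat.sub_self, pow_zero, one_mul]
        calc ∑ i, (S.mulVec (fun i => |f i|)) i ^ 2
            = (fun i => |f i|) ⬝ᵥ ((S * S) *ᵥ (fun i => |f i|)) := key1 _
          _ ≤ t * ((fun i => |f i|) ⬝ᵥ (Δ *ᵥ (fun i => |f i|))) := boundA _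
          _ ≤ t * Q := mul_le_mul_of_nonneg_left habsQ ht.le
      · have ihn := ih hn
        rw [hg n]
        have hstep : ∑ i, (S.mulVec (fun i => |g n i|)) i ^ 2 ≤ b * ∑ i, (g n i) ^ 2 := by
          calc ∑ i, (S.mulVec (fun i => |g n i|)) i ^ 2
              = (fun i => |g n i|) ⬝ᵥ ((S * S) *ᵥ (fun i => |g n i|)) := key1 _
            _ ≤ b * ∑ i, |g n i| ^ 2 := boundB _
            _ = b * ∑ i, (g n i) ^ 2 := by simp [sq_abs]
        calc ∑ i, (S.mulVec (fun i => |g n i|)) i ^ 2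
            ≤ b * ∑ i, (g n i) ^ 2 := hstep
          _ ≤ b * (b ^ (n - 1) * (t * Q)) := mul_le_mul_of_nonneg_left ihn hb0
          _ = b ^ (n + 1 - 1) * (t * Q) := by
              have h6 : n - 1 + 1 = n := by omega
              calc b * (b ^ (n - 1) * (t * Q)) = b ^ (n - 1) * b * (t * Q) := by ring
                _ = b ^ (n - 1 + 1) * (t * Q) := by rw [pow_succ]
                _ = b ^ (n + 1 - 1) * (t * Q) := by rw [h6, Nat.add_sub_cancel]
  have hmain := main k hk
  have hcast : ((k : ℝ) - 1) = ((k - 1 : ℕ) : ℝ) := by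
    rw [Nat.cast_sub hk]; simp
  have hsqrtpow : Real.sqrt (b ^ (k - 1)) = b ^ (((k : ℝ) - 1) / 2) := by
    rw [hcast, Real.sqrt_eq_rpow, ← Real.rpow_natCast b (k - 1), ← Real.rpow_mul hb0]
    congr 1
    ring
  calc Real.sqrt (∑ i, (g k i) ^ 2)
      ≤ Real.sqrt (b ^ (k - 1) * (t * Q)) := Real.sqrt_le_sqrt hmain
    _ = Real.sqrt (b ^ (k - 1)) * (Real.sqrt t * Real.sqrt Q) := by
        rw [Real.sqrt_mul (pow_nonneg hb0 _), Real.sqrt_mul ht.le]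
    _ = Real.sqrt t * b ^ (((k : ℝ) - 1) / 2) * Real.sqrt Q := by
        rw [hsqrtpow]; ring
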